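/- Let 0 < σ < 1 and 1 ≤ p < ∞ satisfy σp > 1. There exists a constant C (depending only on σ and p) such that for every measurable function v : [0,1] → ℝ^m one has (esssup_{t,r ∈ [0,1]} |v(t) − v(r)|)^p ≤ C · ∬_{[0,1]×[0,1]} |v(t) − v(r)|^p / |t − r|^{1+σp} dt dr. -/

import Mathlib

open MeasureTheory Set
open scoped ENNReal NNReal

noncomputable def tw (x : ℝ) : ℝ≥0∞ := (2:ℝ≥0∞) ^ x

lemma tw_mul (x y : ℝ) : tw x * tw y = tw (x + y) :=
  (ENNReal.rpow_add x y (by norm_num) (by norm_num)).symm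

lemma tw_rpow (x y : ℝ) : tw x ^ y = tw (x * y) :=
  (ENNReal.rpow_mul 2 x y).symm

lemma tw_ne_top (x : ℝ) : tw x ≠ ⊤ := by
  rw [tw, show ((2:ℝ≥0∞)) = ((2:ℝ≥0):ℝ≥0∞) by norm_num,
    ← ENNReal.coe_rpow_of_ne_zero (by norm_num)]
  exact ENNReal.coe_ne_top

lemma tw_ne_zero (x : ℝ) : tw x ≠ 0 := by
  simp [tw, ENNReal.rpow_eq_zero_iff]

lemma tw_zero : tw 0 = 1 := by simp [tw]

lemma tw_lt_one {x : ℝ} (hx : x < 0) : tw x < 1 :=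
  ENNReal.rpow_lt_one_of_one_lt_of_neg (by norm_num) hx

noncomputable def len (n : ℕ) : ℝ := (2:ℝ) ^ (-(n:ℝ))

lemma len_pos (n : ℕ) : 0 < len n := Real.rpow_pos_of_pos (by norm_num) _

lemma len_le_one (n : ℕ) : len n ≤ 1 :=
  Real.rpow_le_one_of_one_le_of_nonpos (by norm_num) (neg_nonpos.mpr (Nat.cast_nonneg n))

lemma len_succ_le (n : ℕ) : len (n+1) ≤ len n := by
  apply Real.rpow_le_rpow_of_exponent_le (by norm_num)
  push_cast; linarith

lemma ofReal_len (n : ℕ) : ENNReal.ofReal (len n) = tw (-(n:ℝ)) := by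
  rw [len, tw, ← ENNReal.ofReal_rpow_of_pos (by norm_num)]
  norm_num

noncomputable def cpt (n : ℕ) (t : ℝ) : ℝ := min t (1 - len n)

noncomputable def Jset (n : ℕ) (t : ℝ) : Set ℝ := Icc (cpt n t) (cpt n t + len n)

lemma vol_Jset (n : ℕ) (t : ℝ) : volume (Jset n t) = tw (-(n:ℝ)) := by
  rw [Jset, Real.volume_Icc, add_sub_cancel_left, ofReal_len]

lemma Jset_subset {n : ℕ} {t : ℝ} (ht : t ∈ Icc (0:ℝ) 1) : Jset n t ⊆ Icc 0 1 := by
  apply Icc_subset_Icc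
  · exact le_min ht.1 (by linarith [len_le_one n])
  · rw [cpt]; have := min_le_right t (1 - len n); linarith

lemma mem_Jset {n : ℕ} {t : ℝ} (ht : t ∈ Icc (0:ℝ) 1) : t ∈ Jset n t := by
  constructor
  · exact min_le_left _ _
  · rw [cpt, ← min_add_add_right]
    exact le_min (by linarith [len_pos n]) (by linarith [ht.2])

lemma abs_sub_le_of_mem_Jset {n : ℕ} {t s : ℝ} (ht : t ∈ Icc (0:ℝ) 1)
    (hs : s ∈ Jset n t) : |t - s| ≤ len n := by
  have h1 := mem_Jset (n := n) ht
  rw [Jset, mem_Icc] at h1 hs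
  rw [abs_sub_le_iff]; constructor <;> linarith

lemma Jset_zero {t : ℝ} (ht : t ∈ Icc (0:ℝ) 1) : Jset 0 t = Icc 0 1 := by
  have h0 : len 0 = 1 := by simp [len]
  rw [Jset, cpt, h0, min_eq_right (by linarith [ht.1])]
  norm_num

theorem jensen_aux {α : Type*} [MeasurableSpace α] (μ : Measure α) (f : α → ℝ≥0∞)
    (hf : AEMeasurable f μ) (p : ℝ) (hp : 1 ≤ p) :
    ∫⁻ x, f x ∂μ ≤ (∫⁻ x, f x ^ p ∂μ) ^ (1/p) * (μ univ) ^ (1 - 1/p) := by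
  rcases eq_or_lt_of_le hp with h1 | h1
  · simp [← h1]
  · have hpq : p.HolderConjugate (p / (p - 1)) := .conjExponent h1
    have h2 : (p - 1) / p = 1 - 1/p := by field_simp
    have := ENNReal.lintegral_mul_le_Lp_mul_Lq μ hpq hf aemeasurable_const (g := fun _ => 1)
    simpa [ENNReal.one_rpow, lintegral_const, one_div, h2] using this

lemma div_trick {x d c : ℝ≥0∞} (hdc : d ≤ c) (hd0 : d = 0 → x = 0) (hdt : d ≠ ⊤) :
    x ≤ x / d * c := by
  rcases eq_or_ne d 0 with rfl | h
  · simp [hd0 rfl]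
  · calc x = x / d * d := (ENNReal.div_mul_cancel h hdt).symm
      _ ≤ x / d * c := mul_le_mul_right hdc _

section main

variable {m : ℕ} {v : ℝ → EuclideanSpace ℝ (Fin m)} {a p : ℝ}

/-- the Gagliardo kernel -/
noncomputable def Fker (v : ℝ → EuclideanSpace ℝ (Fin m)) (a p : ℝ) (t r : ℝ) : ℝ≥0∞ :=
  (‖v t - v r‖₊ : ℝ≥0∞) ^ p / (‖t - r‖₊ : ℝ≥0∞) ^ (1 + a)

noncomputable def Gfun (v : ℝ → EuclideanSpace ℝ (Fin m)) (a p : ℝ) (t : ℝ) : ℝ≥0∞ :=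
  ∫⁻ r in Icc (0:ℝ) 1, Fker v a p t r

noncomputable def II (v : ℝ → EuclideanSpace ℝ (Fin m)) (a p : ℝ) : ℝ≥0∞ :=
  ∫⁻ t in Icc (0:ℝ) 1, Gfun v a p t

noncomputable def Ev (v : ℝ → EuclideanSpace ℝ (Fin m)) (n : ℕ) (t : ℝ) : ℝ≥0∞ :=
  tw n * ∫⁻ s in Jset n t, (‖v t - v s‖₊ : ℝ≥0∞)

lemma meas_nn (hv : Measurable v) :
    Measurable (fun q : ℝ × ℝ => (‖v q.1 - v q.2‖₊ : ℝ≥0∞)) :=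
  ((hv.comp measurable_fst).sub (hv.comp measurable_snd)).nnnorm.coe_nnreal_ennreal

lemma meas_nn1 (hv : Measurable v) (t : ℝ) :
    Measurable (fun s : ℝ => (‖v t - v s‖₊ : ℝ≥0∞)) :=
  ((measurable_const.sub hv).nnnorm).coe_nnreal_ennreal

lemma meas_nn1' (hv : Measurable v) (s : ℝ) :
    Measurable (fun t : ℝ => (‖v t - v s‖₊ : ℝ≥0∞)) :=
  ((hv.sub measurable_const).nnnorm).coe_nnreal_ennreal

lemma meas_nnp (hv : Measurable v) :
    Measurable (fun q : ℝ × ℝ => (‖v q.1 - v q.2‖₊ : ℝ≥0∞) ^ p) :=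
  ENNReal.continuous_rpow_const.measurable.comp (meas_nn hv)

lemma meas_Fker (hv : Measurable v) :
    Measurable (fun q : ℝ × ℝ => Fker v a p q.1 q.2) := by
  apply Measurable.div (meas_nnp hv)
  exact ENNReal.continuous_rpow_const.measurable.comp
    ((measurable_fst.sub measurable_snd).nnnorm.coe_nnreal_ennreal)

lemma meas_Gfun (hv : Measurable v) : Measurable (Gfun v a p) :=
  Measurable.lintegral_prod_right (f := fun t r => Fker v a p t r) (meas_Fker hv)

/-- triangle inequality step -/
lemma Ev_succ_le (hv : Measurable v) {t : ℝ} (ht : t ∈ Icc (0:ℝ) 1) (k : ℕ) :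
    Ev v k t ≤ Ev v (k+1) t +
      tw (2*(k:ℝ)+1) * ∫⁻ s in Jset k t, ∫⁻ u in Jset (k+1) t, (‖v s - v u‖₊ : ℝ≥0∞) := by
  set A : ℝ≥0∞ := ∫⁻ u in Jset (k+1) t, (‖v t - v u‖₊ : ℝ≥0∞) with hA
  set W : ℝ≥0∞ := ∫⁻ s in Jset k t, ∫⁻ u in Jset (k+1) t, (‖v u - v s‖₊ : ℝ≥0∞) with hW
  have hstep : ∀ s : ℝ, (‖v t - v s‖₊ : ℝ≥0∞) ≤
      tw (k+1:ℕ) * (A + ∫⁻ u in Jset (k+1) t, (‖v u - v s‖₊ : ℝ≥0∞)) := by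
    intro s
    have h1 : (‖v t - v s‖₊ : ℝ≥0∞) =
        tw (k+1:ℕ) * ∫⁻ _u in Jset (k+1) t, (‖v t - v s‖₊ : ℝ≥0∞) := by
      rw [setLIntegral_const, vol_Jset, mul_comm ((‖v t - v s‖₊ : ℝ≥0∞)), ← mul_assoc, tw_mul,
        add_neg_cancel, tw_zero, one_mul]
    rw [h1]
    have h2 : (∫⁻ _u in Jset (k+1) t, (‖v t - v s‖₊ : ℝ≥0∞)) ≤
        ∫⁻ u in Jset (k+1) t, ((‖v t - v u‖₊ : ℝ≥0∞) + (‖v u - v s‖₊ : ℝ≥0∞)) := by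
      apply lintegral_mono
      intro u
      have h3 : v t - v s = (v t - v u) + (v u - v s) := by abel
      calc (‖v t - v s‖₊ : ℝ≥0∞) = ((‖(v t - v u) + (v u - v s)‖₊ : ℝ≥0)) := by rw [h3]
        _ ≤ ((‖v t - v u‖₊ + ‖v u - v s‖₊ : ℝ≥0) : ℝ≥0∞) :=
            ENNReal.coe_le_coe.2 (nnnorm_add_le _ _)
        _ = (‖v t - v u‖₊ : ℝ≥0∞) + (‖v u - v s‖₊ : ℝ≥0∞) := ENNReal.coe_add _ _
    calc tw (k+1:ℕ) * ∫⁻ _u in Jset (k+1) t, (‖v t - v s‖₊ : ℝ≥0∞)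
        ≤ tw (k+1:ℕ) * ∫⁻ u in Jset (k+1) t,
            ((‖v t - v u‖₊ : ℝ≥0∞) + (‖v u - v s‖₊ : ℝ≥0∞)) := mul_le_mul_right h2 _
      _ = tw (k+1:ℕ) * (A + ∫⁻ u in Jset (k+1) t, (‖v u - v s‖₊ : ℝ≥0∞)) := by
          rw [lintegral_add_left (meas_nn1 hv t)]
  calc Ev v k t ≤ tw (k:ℕ) * ∫⁻ s in Jset k t,
        tw (k+1:ℕ) * (A + ∫⁻ u in Jset (k+1) t, (‖v u - v s‖₊ : ℝ≥0∞)) :=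
        mul_le_mul_right (lintegral_mono hstep) _
    _ = tw (k:ℕ) * (tw (k+1:ℕ) *
        ∫⁻ s in Jset k t, (A + ∫⁻ u in Jset (k+1) t, (‖v u - v s‖₊ : ℝ≥0∞))) := by
        rw [lintegral_const_mul' _ _ (tw_ne_top _)]
    _ = tw (k:ℕ) * (tw (k+1:ℕ) * (A * tw (-(k:ℝ)) + W)) := by
        rw [lintegral_add_left measurable_const, setLIntegral_const, vol_Jset]
    _ = (tw (k:ℕ) * tw (k+1:ℕ) * tw (-(k:ℝ))) * A + (tw (k:ℕ) * tw (k+1:ℕ)) * W := by ring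
    _ = tw (k+1:ℕ) * A + tw (2*(k:ℝ)+1) * W := by
        rw [tw_mul, tw_mul]
        congr 2 <;> push_cast <;> ring
    _ = Ev v (k+1) t + tw (2*(k:ℝ)+1) * W := rfl
    _ = _ := by
        congr 2
        apply lintegral_congr fun s => lintegral_congr fun u => ?_
        rw [← nnnorm_neg, neg_sub]


/-- pointwise kernel domination: if `|s-u| ≤ 2^e` then
`‖v s - v u‖^p ≤ Fker s u * tw (e*(1+a))`. -/
lemma nn_rpow_le_Fker (hp : 1 ≤ p) (ha : 0 < a) {s u e : ℝ}
    (habs : |s - u| ≤ (2:ℝ) ^ e) :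
    (‖v s - v u‖₊ : ℝ≥0∞) ^ p ≤ Fker v a p s u * tw (e * (1 + a)) := by
  have hp0 : (0:ℝ) < p := lt_of_lt_of_le one_pos hp
  have h1a : (0:ℝ) ≤ 1 + a := by linarith
  have hd : ((‖s - u‖₊ : ℝ≥0∞)) ^ (1+a) ≤ tw (e * (1 + a)) := by
    have h2 : (‖s - u‖₊ : ℝ≥0∞) ≤ tw e := by
      rw [← enorm_eq_nnnorm, Real.enorm_eq_ofReal_abs, tw]
      calc ENNReal.ofReal |s - u| ≤ ENNReal.ofReal ((2:ℝ) ^ e) := ENNReal.ofReal_le_ofReal habs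
        _ = (ENNReal.ofReal 2) ^ e := (ENNReal.ofReal_rpow_of_pos (by norm_num)).symm
        _ = (2:ℝ≥0∞) ^ e := by norm_num
    calc ((‖s - u‖₊ : ℝ≥0∞)) ^ (1+a) ≤ (tw e) ^ (1+a) := ENNReal.rpow_le_rpow h2 h1a
      _ = tw (e * (1+a)) := tw_rpow _ _
  rcases eq_or_ne s u with rfl | hsu
  · have : (‖v s - v s‖₊ : ℝ≥0∞) ^ p = 0 := by
      simp [ENNReal.zero_rpow_of_pos hp0]
    rw [this]; exact zero_le
  · rw [Fker]
    apply div_trick hd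
    · intro h0
      exfalso
      rw [ENNReal.rpow_eq_zero_iff] at h0
      rcases h0 with ⟨h0, _⟩ | ⟨h0top, _⟩
      · simp only [ENNReal.coe_eq_zero, nnnorm_eq_zero, sub_eq_zero] at h0
        exact hsu h0
      · exact ENNReal.coe_ne_top h0top
    · exact ENNReal.rpow_ne_top_of_nonneg h1a ENNReal.coe_ne_top

/-- bound on the double integral of the kernel over sub-rectangles -/
lemma double_le_II (hv : Measurable v) {t : ℝ} (ht : t ∈ Icc (0:ℝ) 1) (k k' : ℕ) :
    (∫⁻ s in Jset k t, ∫⁻ u in Jset k' t, Fker v a p s u) ≤ II v a p := by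
  calc (∫⁻ s in Jset k t, ∫⁻ u in Jset k' t, Fker v a p s u)
      ≤ ∫⁻ s in Jset k t, Gfun v a p s := by
        apply lintegral_mono fun s => ?_
        exact lintegral_mono_set (Jset_subset ht)
    _ ≤ II v a p := lintegral_mono_set (Jset_subset ht)

/-- Jensen for a set integral over `Jset` -/
lemma jensen_Jset (hp : 1 ≤ p) (n : ℕ) (t : ℝ) (f : ℝ → ℝ≥0∞)
    (hf : Measurable f) :
    (∫⁻ s in Jset n t, f s) ≤ (∫⁻ s in Jset n t, f s ^ p) ^ (1/p) * tw (-(n:ℝ) * (1 - 1/p)) := by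
  have := jensen_aux (volume.restrict (Jset n t)) f hf.aemeasurable p hp
  rwa [Measure.restrict_apply_univ, vol_Jset, tw_rpow] at this

lemma T_le (hv : Measurable v) (hp : 1 ≤ p) (ha : 1 < a) {t : ℝ} (ht : t ∈ Icc (0:ℝ) 1)
    (k : ℕ) :
    tw (2*(k:ℝ)+1) * ∫⁻ s in Jset k t, ∫⁻ u in Jset (k+1) t, (‖v s - v u‖₊ : ℝ≥0∞)
      ≤ tw (((k:ℝ)*(1-a)+2+a)/p) * (II v a p) ^ (1/p) := by
  have hp0 : (0:ℝ) < p := lt_of_lt_of_le one_pos hp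
  have ha0 : (0:ℝ) < a := by linarith
  set h : ℝ → ℝ≥0∞ := fun s => ∫⁻ u in Jset (k+1) t, (‖v s - v u‖₊ : ℝ≥0∞) ^ p with hh
  have hmeas_h : Measurable h :=
    Measurable.lintegral_prod_right (f := fun s u => (‖v s - v u‖₊ : ℝ≥0∞) ^ p) (meas_nnp hv)
  have hinner : ∀ s : ℝ, (∫⁻ u in Jset (k+1) t, (‖v s - v u‖₊ : ℝ≥0∞)) ≤
      (h s) ^ (1/p) * tw (-((k+1:ℕ):ℝ) * (1 - 1/p)) := fun s =>
    jensen_Jset hp (k+1) t _ (meas_nn1 hv s)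
  have houter : (∫⁻ s in Jset k t, ∫⁻ u in Jset (k+1) t, (‖v s - v u‖₊ : ℝ≥0∞))
      ≤ tw (-((k+1:ℕ):ℝ) * (1 - 1/p)) * ∫⁻ s in Jset k t, (h s) ^ (1/p) := by
    calc (∫⁻ s in Jset k t, ∫⁻ u in Jset (k+1) t, (‖v s - v u‖₊ : ℝ≥0∞))
        ≤ ∫⁻ s in Jset k t, (h s) ^ (1/p) * tw (-((k+1:ℕ):ℝ) * (1 - 1/p)) :=
          lintegral_mono hinner
      _ = _ := by rw [lintegral_mul_const' _ _ (tw_ne_top _), mul_comm]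
  have hJ2 : (∫⁻ s in Jset k t, (h s) ^ (1/p)) ≤
      (∫⁻ s in Jset k t, h s) ^ (1/p) * tw (-(k:ℝ) * (1 - 1/p)) := by
    have hrw : ∀ x : ℝ≥0∞, (x ^ (1/p)) ^ p = x := fun x => by
      rw [← ENNReal.rpow_mul, one_div_mul_cancel hp0.ne', ENNReal.rpow_one]
    have := jensen_Jset hp k t (fun s => (h s) ^ (1/p))
      (ENNReal.continuous_rpow_const.measurable.comp hmeas_h)
    simpa only [hrw] using this
  have hD : (∫⁻ s in Jset k t, h s) ≤ tw ((1-(k:ℝ))*(1+a)) * II v a p := by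
    have hpt : ∀ s, s ∈ Jset k t → h s ≤
        (∫⁻ u in Jset (k+1) t, Fker v a p s u) * tw ((1-(k:ℝ))*(1+a)) := by
      intro s hs
      rw [← lintegral_mul_const' _ _ (tw_ne_top _)]
      apply lintegral_mono_ae
      filter_upwards [ae_restrict_mem (show MeasurableSet (Jset (k+1) t) from measurableSet_Icc)]
        with u hu
      apply nn_rpow_le_Fker hp ha0
      have h1 : |s - t| ≤ len k := by rw [abs_sub_comm]; exact abs_sub_le_of_mem_Jset ht hs
      have h2 : |t - u| ≤ len (k+1) := abs_sub_le_of_mem_Jset ht hu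
      have h3 : |s - u| ≤ |s - t| + |t - u| := abs_sub_le s t u
      have h4 : len (k+1) ≤ len k := len_succ_le k
      have h5 : (2:ℝ) ^ (1-(k:ℝ)) = 2 * len k := by
        rw [len, show (1-(k:ℝ)) = 1 + (-(k:ℝ)) by ring, Real.rpow_add (by norm_num),
          Real.rpow_one]
      linarith
    calc (∫⁻ s in Jset k t, h s)
        ≤ ∫⁻ s in Jset k t, (∫⁻ u in Jset (k+1) t, Fker v a p s u) * tw ((1-(k:ℝ))*(1+a)) := by
          apply lintegral_mono_ae
          filter_upwards [ae_restrict_mem (show MeasurableSet (Jset k t) from measurableSet_Icc)]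
            with s hs using hpt s hs
      _ = (∫⁻ s in Jset k t, ∫⁻ u in Jset (k+1) t, Fker v a p s u) * tw ((1-(k:ℝ))*(1+a)) :=
          lintegral_mul_const' _ _ (tw_ne_top _)
      _ ≤ II v a p * tw ((1-(k:ℝ))*(1+a)) := mul_le_mul_left (double_le_II hv ht k (k+1)) _
      _ = tw ((1-(k:ℝ))*(1+a)) * II v a p := mul_comm _ _
  calc tw (2*(k:ℝ)+1) * ∫⁻ s in Jset k t, ∫⁻ u in Jset (k+1) t, (‖v s - v u‖₊ : ℝ≥0∞)
      ≤ tw (2*(k:ℝ)+1) * (tw (-((k+1:ℕ):ℝ) * (1 - 1/p)) * ∫⁻ s in Jset k t, (h s) ^ (1/p)) :=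
        mul_le_mul_right houter _
    _ ≤ tw (2*(k:ℝ)+1) * (tw (-((k+1:ℕ):ℝ) * (1 - 1/p)) *
        ((∫⁻ s in Jset k t, h s) ^ (1/p) * tw (-(k:ℝ) * (1 - 1/p)))) :=
        mul_le_mul_right (mul_le_mul_right hJ2 _) _
    _ ≤ tw (2*(k:ℝ)+1) * (tw (-((k+1:ℕ):ℝ) * (1 - 1/p)) *
        (((tw ((1-(k:ℝ))*(1+a)) * II v a p) ^ (1/p)) * tw (-(k:ℝ) * (1 - 1/p)))) := by
        apply mul_le_mul_right
        apply mul_le_mul_right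
        exact mul_le_mul_left (ENNReal.rpow_le_rpow hD (by positivity)) _
    _ = tw (((k:ℝ)*(1-a)+2+a)/p) * (II v a p) ^ (1/p) := by
        rw [ENNReal.mul_rpow_of_nonneg _ _ (by positivity), tw_rpow]
        have e1 : tw (2*(k:ℝ)+1) * (tw (-((k+1:ℕ):ℝ) * (1 - 1/p)) *
            ((tw ((1-(k:ℝ))*(1+a)*(1/p)) * (II v a p) ^ (1/p)) * tw (-(k:ℝ) * (1 - 1/p)))) =
            (tw (2*(k:ℝ)+1) * tw (-((k+1:ℕ):ℝ) * (1 - 1/p)) * tw ((1-(k:ℝ))*(1+a)*(1/p)) *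
              tw (-(k:ℝ) * (1 - 1/p))) * (II v a p) ^ (1/p) := by ring
        rw [e1, tw_mul, tw_mul, tw_mul]
        congr 2
        push_cast
        field_simp
        ring

lemma Ev_le (hv : Measurable v) (hp : 1 ≤ p) (ha : 1 < a) {t : ℝ} (ht : t ∈ Icc (0:ℝ) 1)
    (n : ℕ) :
    Ev v n t ≤ tw (-((n:ℝ)*a)/p) * (Gfun v a p t) ^ (1/p) := by
  have hp0 : (0:ℝ) < p := lt_of_lt_of_le one_pos hp
  have ha0 : (0:ℝ) < a := by linarith
  have hJ := jensen_Jset hp n t _ (meas_nn1 hv t)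
  have hD : (∫⁻ s in Jset n t, (‖v t - v s‖₊ : ℝ≥0∞) ^ p) ≤
      tw (-(n:ℝ)*(1+a)) * Gfun v a p t := by
    calc (∫⁻ s in Jset n t, (‖v t - v s‖₊ : ℝ≥0∞) ^ p)
        ≤ ∫⁻ s in Jset n t, Fker v a p t s * tw (-(n:ℝ)*(1+a)) := by
          apply lintegral_mono_ae
          filter_upwards [ae_restrict_mem (show MeasurableSet (Jset n t) from measurableSet_Icc)]
            with s hs
          exact nn_rpow_le_Fker hp ha0 (by
            have := abs_sub_le_of_mem_Jset ht hs
            rwa [len] at this)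
      _ = (∫⁻ s in Jset n t, Fker v a p t s) * tw (-(n:ℝ)*(1+a)) :=
          lintegral_mul_const' _ _ (tw_ne_top _)
      _ ≤ Gfun v a p t * tw (-(n:ℝ)*(1+a)) :=
          mul_le_mul_left (lintegral_mono_set (Jset_subset ht)) _
      _ = tw (-(n:ℝ)*(1+a)) * Gfun v a p t := mul_comm _ _
  calc Ev v n t ≤ tw (n:ℝ) *
      (((tw (-(n:ℝ)*(1+a)) * Gfun v a p t) ^ (1/p)) * tw (-(n:ℝ) * (1 - 1/p))) := by
        apply mul_le_mul_right
        exact hJ.trans (mul_le_mul_left (ENNReal.rpow_le_rpow hD (by positivity)) _)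
    _ = tw (-((n:ℝ)*a)/p) * (Gfun v a p t) ^ (1/p) := by
        rw [ENNReal.mul_rpow_of_nonneg _ _ (by positivity), tw_rpow]
        have e1 : tw (n:ℝ) * ((tw (-(n:ℝ)*(1+a)*(1/p)) * (Gfun v a p t) ^ (1/p)) *
            tw (-(n:ℝ) * (1 - 1/p))) =
            (tw (n:ℝ) * tw (-(n:ℝ)*(1+a)*(1/p)) * tw (-(n:ℝ) * (1 - 1/p))) *
              (Gfun v a p t) ^ (1/p) := by ring
        rw [e1, tw_mul, tw_mul]
        congr 2
        field_simp
        ring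

lemma chain (hv : Measurable v) (hp : 1 ≤ p) (ha : 1 < a) {t : ℝ} (ht : t ∈ Icc (0:ℝ) 1)
    (n : ℕ) :
    Ev v 0 t ≤ Ev v n t +
      (∑ k ∈ Finset.range n, tw (((k:ℝ)*(1-a)+2+a)/p)) * (II v a p) ^ (1/p) := by
  induction n with
  | zero => simp
  | succ n ih =>
    calc Ev v 0 t ≤ Ev v n t +
        (∑ k ∈ Finset.range n, tw (((k:ℝ)*(1-a)+2+a)/p)) * (II v a p) ^ (1/p) := ih
      _ ≤ (Ev v (n+1) t +
          tw (2*(n:ℝ)+1) * ∫⁻ s in Jset n t, ∫⁻ u in Jset (n+1) t, (‖v s - v u‖₊ : ℝ≥0∞)) +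
          (∑ k ∈ Finset.range n, tw (((k:ℝ)*(1-a)+2+a)/p)) * (II v a p) ^ (1/p) :=
          add_le_add_left (Ev_succ_le hv ht n) _
      _ ≤ (Ev v (n+1) t + tw (((n:ℝ)*(1-a)+2+a)/p) * (II v a p) ^ (1/p)) +
          (∑ k ∈ Finset.range n, tw (((k:ℝ)*(1-a)+2+a)/p)) * (II v a p) ^ (1/p) :=
          add_le_add_left (add_le_add_right (T_le hv hp ha ht n) _) _
      _ = _ := by rw [Finset.sum_range_succ, add_mul]; ring

lemma E0_le (hv : Measurable v) (hp : 1 ≤ p) (ha : 1 < a) {t : ℝ} (ht : t ∈ Icc (0:ℝ) 1)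
    (hG : Gfun v a p t ≠ ⊤) :
    (∫⁻ s in Icc (0:ℝ) 1, (‖v t - v s‖₊ : ℝ≥0∞)) ≤
      tw ((2+a)/p) * (1 - tw ((1-a)/p))⁻¹ * (II v a p) ^ (1/p) := by
  have hp0 : (0:ℝ) < p := lt_of_lt_of_le one_pos hp
  have hE0 : (∫⁻ s in Icc (0:ℝ) 1, (‖v t - v s‖₊ : ℝ≥0∞)) = Ev v 0 t := by
    rw [Ev, Jset_zero ht, Nat.cast_zero, tw_zero, one_mul]
  have hsum : ∀ n : ℕ, (∑ k ∈ Finset.range n, tw (((k:ℝ)*(1-a)+2+a)/p)) ≤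
      tw ((2+a)/p) * (1 - tw ((1-a)/p))⁻¹ := by
    intro n
    calc (∑ k ∈ Finset.range n, tw (((k:ℝ)*(1-a)+2+a)/p))
        ≤ ∑' k : ℕ, tw (((k:ℝ)*(1-a)+2+a)/p) := ENNReal.sum_le_tsum _
      _ = ∑' k : ℕ, tw ((2+a)/p) * (tw ((1-a)/p)) ^ (k:ℕ) := by
          apply tsum_congr fun k => ?_
          rw [← ENNReal.rpow_natCast (tw ((1-a)/p)) k, tw_rpow, tw_mul]
          congr 1
          field_simp
          ring
      _ = tw ((2+a)/p) * (1 - tw ((1-a)/p))⁻¹ := by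
          rw [ENNReal.tsum_mul_left, ENNReal.tsum_geometric]
  have hGp : (Gfun v a p t) ^ (1/p) ≠ ⊤ :=
    ENNReal.rpow_ne_top_of_nonneg (by positivity) hG
  have hn : ∀ n : ℕ, Ev v 0 t ≤ tw (-((n:ℝ)*a)/p) * (Gfun v a p t) ^ (1/p) +
      tw ((2+a)/p) * (1 - tw ((1-a)/p))⁻¹ * (II v a p) ^ (1/p) := fun n =>
    (chain hv hp ha ht n).trans
      (add_le_add (Ev_le hv hp ha ht n) (mul_le_mul_left (hsum n) _))
  have htend0 : Filter.Tendsto (fun n : ℕ => tw (-((n:ℝ)*a)/p)) Filter.atTop (nhds 0) := by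
    have heq : ∀ n : ℕ, tw (-((n:ℝ)*a)/p) = (tw (-(a/p))) ^ (n:ℕ) := fun n => by
      rw [← ENNReal.rpow_natCast (tw (-(a/p))) n, tw_rpow]
      congr 1
      ring
    simp only [heq]
    exact ENNReal.tendsto_pow_atTop_nhds_zero_of_lt_one
      (tw_lt_one (by rw [neg_lt, neg_zero]; positivity))
  have htend : Filter.Tendsto
      (fun n : ℕ => tw (-((n:ℝ)*a)/p) * (Gfun v a p t) ^ (1/p) +
        tw ((2+a)/p) * (1 - tw ((1-a)/p))⁻¹ * (II v a p) ^ (1/p)) Filter.atTop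
      (nhds (tw ((2+a)/p) * (1 - tw ((1-a)/p))⁻¹ * (II v a p) ^ (1/p))) := by
    have h1 : Filter.Tendsto (fun n : ℕ => tw (-((n:ℝ)*a)/p) * (Gfun v a p t) ^ (1/p))
        Filter.atTop (nhds 0) := by
      have := ENNReal.Tendsto.mul_const htend0 (Or.inr hGp)
      simpa using this
    have := h1.add (tendsto_const_nhds (x := tw ((2+a)/p) * (1 - tw ((1-a)/p))⁻¹ *
      (II v a p) ^ (1/p)) (f := Filter.atTop (α := ℕ)))
    simpa using this
  rw [hE0]
  exact ge_of_tendsto' htend hn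

end main

lemma ae_of_ae_fst {α β : Type*} [MeasurableSpace α] [MeasurableSpace β] {μ : Measure α}
    {ν : Measure β} [SFinite ν] {P : α → Prop} (h : ∀ᵐ x ∂μ, P x) :
    ∀ᵐ q ∂(μ.prod ν), P q.1 := by
  rw [ae_iff] at h ⊢
  apply measure_mono_null (show {q : α × β | ¬ P q.1} ⊆ {x | ¬ P x} ×ˢ (univ : Set β) from
    fun q hq => ⟨hq, mem_univ _⟩)
  rw [Measure.prod_prod, h, zero_mul]

lemma ae_of_ae_snd {α β : Type*} [MeasurableSpace α] [MeasurableSpace β] {μ : Measure α}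
    {ν : Measure β} [SFinite ν] {P : β → Prop} (h : ∀ᵐ x ∂ν, P x) :
    ∀ᵐ q ∂(μ.prod ν), P q.2 := by
  rw [ae_iff] at h ⊢
  apply measure_mono_null (show {q : α × β | ¬ P q.2} ⊆ (univ : Set α) ×ˢ {x | ¬ P x} from
    fun q hq => ⟨mem_univ _, hq⟩)
  rw [Measure.prod_prod, h, mul_zero]

/-- one-dimensional fractional Morrey–Sobolev oscillation estimate for
`σp > 1`: the essential oscillation of `v` on `[0,1]` is controlled by its Gagliardo
`W^{σ,p}` seminorm. -/
theorem stmt_7 (σ p : ℝ) (hσ : 0 < σ) (hσ1 : σ < 1) (hp : 1 ≤ p) (hσp : 1 < σ * p) :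
    ∃ C : ℝ, 0 < C ∧
      ∀ (m : ℕ) (v : ℝ → EuclideanSpace ℝ (Fin m)), Measurable v →
        (essSup (fun q : ℝ × ℝ => (‖v q.1 - v q.2‖₊ : ℝ≥0∞))
            ((volume : Measure (ℝ × ℝ)).restrict (Set.Icc 0 1 ×ˢ Set.Icc 0 1))) ^ p
          ≤ ENNReal.ofReal C *
            ∫⁻ t in Set.Icc (0 : ℝ) 1, ∫⁻ r in Set.Icc (0 : ℝ) 1,
              (‖v t - v r‖₊ : ℝ≥0∞) ^ p / (‖t - r‖₊ : ℝ≥0∞) ^ (1 + σ * p) := by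
  have hp0 : (0:ℝ) < p := lt_of_lt_of_le one_pos hp
  set K : ℝ≥0∞ := 2 * (tw ((2+σ*p)/p) * (1 - tw ((1-σ*p)/p))⁻¹) with hK
  have hrlt : tw ((1-σ*p)/p) < 1 := tw_lt_one (by
    apply div_neg_of_neg_of_pos _ hp0; linarith)
  have hKtop : K ≠ ⊤ := by
    apply ENNReal.mul_ne_top (by norm_num)
    apply ENNReal.mul_ne_top (tw_ne_top _)
    rw [ENNReal.inv_ne_top]
    intro h0
    rw [tsub_eq_zero_iff_le] at h0
    exact absurd h0 (not_le.2 hrlt)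
  have hKp_top : K ^ p ≠ ⊤ := ENNReal.rpow_ne_top_of_nonneg hp0.le hKtop
  refine ⟨(K ^ p).toReal + 1, by positivity, ?_⟩
  intro m v hv
  have hIrw : (∫⁻ t in Set.Icc (0 : ℝ) 1, ∫⁻ r in Set.Icc (0 : ℝ) 1,
      (‖v t - v r‖₊ : ℝ≥0∞) ^ p / (‖t - r‖₊ : ℝ≥0∞) ^ (1 + σ * p)) = II v (σ*p) p := rfl
  rw [hIrw]
  by_cases hI : II v (σ*p) p = ⊤
  · rw [hI, ENNReal.mul_top (by
      rw [Ne, ENNReal.ofReal_eq_zero, not_le]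
      positivity)]
    exact le_top
  -- main case
  set B : ℝ≥0∞ := tw ((2+σ*p)/p) * (1 - tw ((1-σ*p)/p))⁻¹ * (II v (σ*p) p) ^ (1/p) with hB
  have hP : ∀ᵐ t ∂(volume.restrict (Icc (0:ℝ) 1)),
      (∫⁻ s in Icc (0:ℝ) 1, (‖v t - v s‖₊ : ℝ≥0∞)) ≤ B := by
    filter_upwards [ae_restrict_mem (measurableSet_Icc (a := (0:ℝ)) (b := 1)),
      ae_lt_top (meas_Gfun hv) hI] with t ht hG
    exact E0_le hv hp hσp ht hG.ne
  have prod_rw : (volume : Measure (ℝ × ℝ)).restrict (Set.Icc 0 1 ×ˢ Set.Icc 0 1) =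
      (volume.restrict (Icc (0:ℝ) 1)).prod (volume.restrict (Icc (0:ℝ) 1)) := by
    rw [Measure.volume_eq_prod, ← Measure.prod_restrict]
  have key : ∀ t r : ℝ, (‖v t - v r‖₊ : ℝ≥0∞) ≤
      (∫⁻ s in Icc (0:ℝ) 1, (‖v t - v s‖₊ : ℝ≥0∞)) +
      (∫⁻ s in Icc (0:ℝ) 1, (‖v r - v s‖₊ : ℝ≥0∞)) := by
    intro t r
    have h1 : (‖v t - v r‖₊ : ℝ≥0∞) = ∫⁻ _s in Icc (0:ℝ) 1, (‖v t - v r‖₊ : ℝ≥0∞) := by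
      rw [setLIntegral_const, Real.volume_Icc]
      norm_num
    rw [h1]
    calc (∫⁻ _s in Icc (0:ℝ) 1, (‖v t - v r‖₊ : ℝ≥0∞))
        ≤ ∫⁻ s in Icc (0:ℝ) 1, ((‖v t - v s‖₊ : ℝ≥0∞) + (‖v r - v s‖₊ : ℝ≥0∞)) := by
          apply lintegral_mono fun s => ?_
          have h3 : v t - v r = (v t - v s) + (v s - v r) := by abel
          calc (‖v t - v r‖₊ : ℝ≥0∞) = ((‖(v t - v s) + (v s - v r)‖₊ : ℝ≥0)) := by rw [h3]
            _ ≤ ((‖v t - v s‖₊ + ‖v s - v r‖₊ : ℝ≥0) : ℝ≥0∞) :=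
                ENNReal.coe_le_coe.2 (nnnorm_add_le _ _)
            _ = (‖v t - v s‖₊ : ℝ≥0∞) + (‖v s - v r‖₊ : ℝ≥0∞) := ENNReal.coe_add _ _
            _ = (‖v t - v s‖₊ : ℝ≥0∞) + (‖v r - v s‖₊ : ℝ≥0∞) := by
                rw [← nnnorm_neg (v s - v r), neg_sub]
      _ = _ := lintegral_add_left (meas_nn1 hv t) _
  have hae : ∀ᵐ q ∂((volume : Measure (ℝ × ℝ)).restrict (Set.Icc 0 1 ×ˢ Set.Icc 0 1)),
      (fun q : ℝ × ℝ => (‖v q.1 - v q.2‖₊ : ℝ≥0∞)) q ≤ B + B := by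
    rw [prod_rw]
    filter_upwards [ae_of_ae_fst (ν := volume.restrict (Icc (0:ℝ) 1)) hP,
      ae_of_ae_snd (μ := volume.restrict (Icc (0:ℝ) 1)) hP] with q h1 h2
    exact (key q.1 q.2).trans (add_le_add h1 h2)
  have hess : essSup (fun q : ℝ × ℝ => (‖v q.1 - v q.2‖₊ : ℝ≥0∞))
      ((volume : Measure (ℝ × ℝ)).restrict (Set.Icc 0 1 ×ˢ Set.Icc 0 1)) ≤ K * (II v (σ*p) p) ^ (1/p) := by
    have h2B : B + B = K * (II v (σ*p) p) ^ (1/p) := by rw [hB, hK]; ring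
    exact h2B ▸ essSup_le_of_ae_le _ hae
  calc (essSup (fun q : ℝ × ℝ => (‖v q.1 - v q.2‖₊ : ℝ≥0∞))
      ((volume : Measure (ℝ × ℝ)).restrict (Set.Icc 0 1 ×ˢ Set.Icc 0 1))) ^ p
      ≤ (K * (II v (σ*p) p) ^ (1/p)) ^ p := ENNReal.rpow_le_rpow hess hp0.le
    _ = K ^ p * II v (σ*p) p := by
        rw [ENNReal.mul_rpow_of_nonneg _ _ hp0.le, ← ENNReal.rpow_mul,
          one_div_mul_cancel hp0.ne', ENNReal.rpow_one]
    _ ≤ ENNReal.ofReal ((K ^ p).toReal + 1) * II v (σ*p) p := by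
        apply mul_le_mul_left
        conv_lhs => rw [← ENNReal.ofReal_toReal hKp_top]
        exact ENNReal.ofReal_le_ofReal (by linarith [ENNReal.toReal_nonneg (a := K ^ p)])
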